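/- Let P ⊆ ℝ^d be a closed convex cone spanning ℝ^d with P ∩ (−P) = {0}, let Ω be the interior of P, let A be a P-module, and set B = −(interior(A))ᶜ = {−x : x ∉ interior(A)}. Let N : L²(ℝ^d) → L²(ℝ^d) be the composition with negation, (Nf)(y) = f(−y), which is a linear isometric equivalence. Then N maps the orthogonal complement (H_A)^⊥ = {f ∈ L²(ℝ^d) : f = 0 a.e. on A} onto H_B, and for every a ∈ Ω and every f ∈ (H_A)^⊥ one has N(τ_{−a} f) = τ_a (N f). In particular, the opposite representation of V^A (given by the operators τ_{−a}, a ∈ Ω, restricted to (H_A)^⊥) is unitarily equivalent to V^B. -/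

import Mathlib

open MeasureTheory

lemma aux_null {d : ℕ} (S : Set (EuclideanSpace ℝ (Fin d)))
    (hS : MeasurableSet S) (a : EuclideanSpace ℝ (Fin d))
    (hdisj : ∀ x ∈ S, ∀ t : ℝ, 0 < t → x + t • a ∉ S) :
    volume S = 0 := by
  have key : ∀ R : ℕ, volume (S ∩ Metric.closedBall 0 (R : ℝ)) = 0 := by
    intro R
    set S' := S ∩ Metric.closedBall 0 (R : ℝ) with hS'def
    have hS'meas : MeasurableSet S' := hS.inter measurableSet_closedBall
    by_contra hne
    set T : ℕ → Set (EuclideanSpace ℝ (Fin d)) :=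
      fun n => (fun x => x + ((1 : ℝ) / (n + 1)) • a) ⁻¹' S' with hTdef
    have hTmeas : ∀ n, MeasurableSet (T n) := fun n =>
      hS'meas.preimage (measurable_add_const _)
    have hTvol : ∀ n, volume (T n) = volume S' := fun n =>
      measure_preimage_add_right volume _ S'
    have hdisjlt : ∀ m n : ℕ, m < n → Disjoint (T m) (T n) := by
      intro m n h
      rw [Set.disjoint_left]
      intro x hxm hxn
      have htlt : (1 : ℝ) / (n + 1) < 1 / (m + 1) := by
        apply one_div_lt_one_div_of_lt (by positivity)
        have : (m : ℝ) < n := by exact_mod_cast h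
        linarith
      have hy : x + ((1 : ℝ) / (n + 1)) • a ∈ S := hxn.1
      have hcontr := hdisj _ hy ((1 : ℝ) / (m + 1) - 1 / (n + 1)) (by linarith)
      apply hcontr
      have heq : x + ((1 : ℝ) / (n + 1)) • a + ((1 : ℝ) / (m + 1) - 1 / (n + 1)) • a
          = x + ((1 : ℝ) / (m + 1)) • a := by
        rw [sub_smul]; abel
      rw [heq]
      exact hxm.1
    have hTdisj : Pairwise (Function.onFun Disjoint T) := fun m n hmn => by
      rcases hmn.lt_or_gt with h | h
      · exact hdisjlt _ _ h
      · exact (hdisjlt _ _ h).symm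
    have hTsub : ∀ n, T n ⊆ Metric.closedBall 0 ((R : ℝ) + ‖a‖) := by
      intro n x hx
      have h1 : x + ((1 : ℝ) / (n + 1)) • a ∈ Metric.closedBall 0 (R : ℝ) := hx.2
      rw [Metric.mem_closedBall, dist_zero_right] at h1 ⊢
      have h2 : ‖x‖ ≤ ‖x + ((1 : ℝ) / (n + 1)) • a‖ + ‖((1 : ℝ) / (n + 1)) • a‖ := by
        have := norm_add_le (x + ((1 : ℝ) / (n + 1)) • a) (-(((1 : ℝ) / (n + 1)) • a))
        simpa using this
      have h3 : ‖((1 : ℝ) / (n + 1)) • a‖ ≤ ‖a‖ := by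
        rw [norm_smul, Real.norm_eq_abs, abs_of_pos (by positivity)]
        have hle : (1 : ℝ) / (n + 1) ≤ 1 := by
          rw [div_le_one (by positivity)]
          linarith [Nat.cast_nonneg (α := ℝ) n]
        nlinarith [norm_nonneg a]
      linarith
    have hsum : (∑' _ : ℕ, volume S')
        ≤ volume (Metric.closedBall (0 : EuclideanSpace ℝ (Fin d)) ((R : ℝ) + ‖a‖)) := by
      calc (∑' _ : ℕ, volume S') = ∑' n, volume (T n) := by simp [hTvol]
        _ = volume (⋃ n, T n) := (measure_iUnion hTdisj hTmeas).symm
        _ ≤ _ := measure_mono (Set.iUnion_subset hTsub)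
    rw [ENNReal.tsum_const_eq_top_of_ne_zero hne] at hsum
    exact absurd (top_le_iff.1 hsum) (measure_closedBall_lt_top).ne
  have hsub : S ⊆ ⋃ n : ℕ, S ∩ Metric.closedBall 0 (n : ℝ) := by
    intro x hx
    obtain ⟨n, hn⟩ := exists_nat_ge ‖x‖
    exact Set.mem_iUnion.2 ⟨n, hx, by simpa [Metric.mem_closedBall, dist_zero_right] using hn⟩
  exact measure_mono_null hsub (measure_iUnion_null fun n => key n)
/-- Let `P ⊆ ℝ^d` be a closed convex cone spanning `ℝ^d` with `P ∩ (−P) = {0}`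
and interior `Ω`, let `A` be a `P`-module and set `B = −(interior A)ᶜ`. Let
`N : L²(ℝ^d) ≃ L²(ℝ^d)` be composition with negation, `(N f)(y) = f (−y)`, and let
`τ_x` be the translation unitaries, `(τ_x f)(y) = f (y − x)`. Then `N` maps
`(H_A)ᗮ = {f : f = 0 a.e. on A}` onto `H_B = {f : f = 0 a.e. on Bᶜ}`, and
`N (τ_{−a} f) = τ_a (N f)` for all `a ∈ Ω` and `f ∈ (H_A)ᗮ`. -/
theorem opposite_representation_equivalent {d : ℕ}
    (P : Set (EuclideanSpace ℝ (Fin d)))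
    (hPclosed : IsClosed P)
    (hPadd : ∀ x ∈ P, ∀ y ∈ P, x + y ∈ P)
    (hPsmul : ∀ (t : ℝ), 0 ≤ t → ∀ x ∈ P, t • x ∈ P)
    (hPspan : Submodule.span ℝ P = ⊤)
    (hPpointed : P ∩ (-P) = {0})
    (A : Set (EuclideanSpace ℝ (Fin d)))
    (hAne : A.Nonempty) (hAproper : A ≠ Set.univ) (hAclosed : IsClosed A)
    (hAmod : ∀ x ∈ A, ∀ p ∈ P, x + p ∈ A)
    (N : Lp ℂ 2 (volume : Measure (EuclideanSpace ℝ (Fin d))) ≃ₗᵢ[ℂ]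
         Lp ℂ 2 (volume : Measure (EuclideanSpace ℝ (Fin d))))
    (hN : ∀ f : Lp ℂ 2 (volume : Measure (EuclideanSpace ℝ (Fin d))),
      ⇑(N f) =ᵐ[volume] fun y => f (-y))
    (τ : EuclideanSpace ℝ (Fin d) →
      (Lp ℂ 2 (volume : Measure (EuclideanSpace ℝ (Fin d))) ≃ₗᵢ[ℂ]
       Lp ℂ 2 (volume : Measure (EuclideanSpace ℝ (Fin d)))))
    (hτ : ∀ x, ∀ f : Lp ℂ 2 (volume : Measure (EuclideanSpace ℝ (Fin d))),
      ⇑(τ x f) =ᵐ[volume] fun y => f (y - x)) :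
    (⇑N '' {f : Lp ℂ 2 (volume : Measure (EuclideanSpace ℝ (Fin d))) |
          ∀ᵐ y ∂(volume : Measure (EuclideanSpace ℝ (Fin d))), y ∈ A → f y = 0}
        = {f : Lp ℂ 2 (volume : Measure (EuclideanSpace ℝ (Fin d))) |
          ∀ᵐ y ∂(volume : Measure (EuclideanSpace ℝ (Fin d))),
            y ∉ (fun x => -x) '' (interior A)ᶜ → f y = 0}) ∧
    ∀ a ∈ interior P, ∀ f : Lp ℂ 2 (volume : Measure (EuclideanSpace ℝ (Fin d))),
      (∀ᵐ y ∂(volume : Measure (EuclideanSpace ℝ (Fin d))), y ∈ A → f y = 0) →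
        N (τ (-a) f) = τ a (N f) := by
  -- nontriviality
  have hnt : Nontrivial (EuclideanSpace ℝ (Fin d)) := by
    by_contra h
    rw [not_nontrivial_iff_subsingleton] at h
    obtain ⟨x, hx⟩ := hAne
    exact hAproper (Set.eq_univ_of_forall fun y => by rwa [Subsingleton.elim y x])
  -- P is nonempty, contains 0, convex
  have hPne : P.Nonempty := by
    rcases Set.eq_empty_or_nonempty P with h | h
    · rw [h, Submodule.span_empty] at hPspan
      exact absurd hPspan bot_ne_top
    · exact h
  obtain ⟨x₀, hx₀⟩ := hPne
  have h0P : (0 : EuclideanSpace ℝ (Fin d)) ∈ P := by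
    simpa using hPsmul 0 le_rfl x₀ hx₀
  have hPconv : Convex ℝ P := fun x hx y hy s t hs ht hst =>
    hPadd _ (hPsmul s hs x hx) _ (hPsmul t ht y hy)
  -- affine span is top, hence interior nonempty
  have hvs : vectorSpan ℝ P = ⊤ := by
    rw [eq_top_iff, ← hPspan]
    apply Submodule.span_le.2
    intro x hx
    have := vsub_mem_vectorSpan ℝ hx h0P
    simpa using this
  have haff : affineSpan ℝ P = ⊤ := by
    rw [AffineSubspace.affineSpan_eq_top_iff_vectorSpan_eq_top_of_nonempty ℝ (EuclideanSpace ℝ (Fin d))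
      (EuclideanSpace ℝ (Fin d)) ⟨x₀, hx₀⟩]
    exact hvs
  have hint : (interior P).Nonempty :=
    hPconv.interior_nonempty_iff_affineSpan_eq_top.2 haff
  obtain ⟨a, haP⟩ := hint
  -- positive scalings preserve interior P; A + interior P ⊆ interior A
  have hsmulInt : ∀ t : ℝ, 0 < t → ∀ x ∈ interior P, t • x ∈ interior P := by
    intro t ht x hx
    have hmap : IsOpenMap (fun y : EuclideanSpace ℝ (Fin d) => t • y) :=
      isOpenMap_smul₀ (ne_of_gt ht)
    have hsub : (fun y : EuclideanSpace ℝ (Fin d) => t • y) '' interior P ⊆ P := by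
      rintro _ ⟨y, hy, rfl⟩
      exact hPsmul t ht.le y (interior_subset hy)
    exact interior_maximal hsub (hmap _ isOpen_interior) ⟨x, hx, rfl⟩
  have haddInt : ∀ x ∈ A, ∀ w ∈ interior P, x + w ∈ interior A := by
    intro x hx w hw
    have hmap : IsOpenMap (fun y : EuclideanSpace ℝ (Fin d) => x + y) :=
      isOpenMap_add_left x
    have hsub : (fun y : EuclideanSpace ℝ (Fin d) => x + y) '' interior P ⊆ A := by
      rintro _ ⟨y, hy, rfl⟩
      exact hAmod x hx y (interior_subset hy)
    exact interior_maximal hsub (hmap _ isOpen_interior) ⟨w, hw, rfl⟩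
  -- frontier of A is null
  have hfr : volume (frontier A) = 0 := by
    apply aux_null _ isClosed_frontier.measurableSet a
    intro x hx t ht hx'
    have hxA : x ∈ A := hAclosed.closure_eq ▸ frontier_subset_closure hx
    have hmem : x + t • a ∈ interior A := haddInt x hxA _ (hsmulInt t ht a haP)
    exact hx'.2 hmem
  have haefr : ∀ᵐ y ∂(volume : Measure (EuclideanSpace ℝ (Fin d))), y ∉ frontier A :=
    measure_eq_zero_iff_ae_notMem.1 hfr
  have hnegq : Measure.QuasiMeasurePreserving
      (fun y : EuclideanSpace ℝ (Fin d) => -y) volume volume :=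
    (Measure.measurePreserving_neg _).quasiMeasurePreserving
  constructor
  · ext g
    simp only [Set.mem_image, Set.mem_setOf_eq]
    constructor
    · rintro ⟨f, hf, rfl⟩
      have h1 := hN f
      have h2 : ∀ᵐ y ∂(volume : Measure (EuclideanSpace ℝ (Fin d))),
          -y ∈ A → f (-y) = 0 := hnegq.ae hf
      filter_upwards [h1, h2] with y hy1 hy2 hyB
      rw [hy1]
      apply hy2
      by_contra hc
      exact hyB ⟨-y, fun h => hc (interior_subset h), by simp⟩
    · intro hg
      refine ⟨N.symm g, ?_, by simp⟩
      have h1 := hN (N.symm g)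
      rw [LinearIsometryEquiv.apply_symm_apply] at h1
      have h2 : ∀ᵐ y ∂(volume : Measure (EuclideanSpace ℝ (Fin d))),
          -y ∈ interior A → (N.symm g) (-y) = 0 := by
        filter_upwards [h1, hg] with y hy1 hy2 hmem
        rw [← hy1]
        apply hy2
        rintro ⟨x, hx, rfl⟩
        exact hx (by simpa using hmem)
      have h3 : ∀ᵐ z ∂(volume : Measure (EuclideanSpace ℝ (Fin d))),
          z ∈ interior A → (N.symm g) z = 0 := by
        have := hnegq.ae h2
        simpa using this
      filter_upwards [h3, haefr] with z hz hzf hzA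
      apply hz
      by_contra hzi
      exact hzf ⟨subset_closure hzA, hzi⟩
  · intro b hb f _
    apply Lp.ext
    have e1 := hN (τ (-b) f)
    have e2 : (fun y => (τ (-b) f) (-y))
        =ᵐ[(volume : Measure (EuclideanSpace ℝ (Fin d)))] fun y => f (-y - -b) := by
      have h := hnegq.ae_eq (hτ (-b) f)
      simpa [Function.comp_def] using h
    have e3 := hτ b (N f)
    have hsubq : Measure.QuasiMeasurePreserving
        (fun y : EuclideanSpace ℝ (Fin d) => y - b) volume volume :=
      (measurePreserving_sub_right volume b).quasiMeasurePreserving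
    have e4 : (fun y => (N f) (y - b))
        =ᵐ[(volume : Measure (EuclideanSpace ℝ (Fin d)))] fun y => f (b - y) := by
      have h := hsubq.ae_eq (hN f)
      simpa only [Function.comp_def, neg_sub] using h
    have emid : (fun y : EuclideanSpace ℝ (Fin d) => f (-y - -b))
        = fun y => f (b - y) := by
      funext y; congr 1; abel
    refine (e1.trans e2).trans ?_
    rw [emid]
    exact (e3.trans e4).symm
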